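/- Let a≥0, let h: (a,∞) → [0,∞) be measurable with ∫_a^∞ h(z) z² dz < ∞, and let A, B, N ≥ 0. Define L(ρ) = exp(−ρA − B∫_a^∞(1 − e^{−ρ N h(z)})z² dz) for ρ > 0. Then for every natural number n ≥ 1, L is n-times differentiable at ρ = 1 and L^{(n)}(1) = (−1)^n · B_n(q_1,…,q_n) · L(1), where q_1 = A + B∫_a^∞ N h(z) e^{−N h(z)} z² dz and q_m = B∫_a^∞ (N h(z))^m e^{−N h(z)} z² dz for m ≥ 2. -/

import Mathlib

open MeasureTheory Real Set Filter

/-- Complete exponential Bell polynomials: `bell x n = Bₙ(x 1, …, x n)`. -/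
noncomputable def bell (x : ℕ → ℝ) : ℕ → ℝ
  | 0 => 1
  | n + 1 => ∑ k ∈ Finset.range (n + 1), (n.choose k : ℝ) * bell x (n - k) * x (k + 1)

lemma bell_neg (x : ℕ → ℝ) : ∀ n, bell (fun m => (-1 : ℝ) ^ m * x m) n = (-1) ^ n * bell x n := by
  intro n
  induction n using Nat.strong_induction_on with
  | _ n ih =>
    match n with
    | 0 => simp [bell]
    | n + 1 =>
      rw [bell, bell, Finset.mul_sum]
      refine Finset.sum_congr rfl fun k hk => ?_
      rw [Finset.mem_range] at hk
      rw [ih (n - k) (by omega)]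
      have : (-1 : ℝ) ^ (n - k) * (-1) ^ (k + 1) = (-1) ^ (n + 1) := by
        rw [← pow_add]; congr 1; omega
      linear_combination ((n.choose k : ℝ) * bell x (n - k) * x (k + 1)) * this

lemma pow_mul_exp_neg_le (m : ℕ) {r c : ℝ} (hr : 0 < r) (hc : 0 ≤ c) :
    c ^ m * Real.exp (-(r * c)) ≤ m.factorial / r ^ m := by
  have h1 : (r * c) ^ m / m.factorial ≤ Real.exp (r * c) :=
    Real.pow_div_factorial_le_exp (x := r * c) (by positivity) m
  have h2 : c ^ m ≤ m.factorial / r ^ m * Real.exp (r * c) := by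
    rw [mul_pow] at h1
    rw [div_le_iff₀ (by positivity)] at h1
    rw [div_mul_eq_mul_div, le_div_iff₀ (by positivity)]
    calc c ^ m * r ^ m = r ^ m * c ^ m := by ring
    _ ≤ Real.exp (r * c) * m.factorial := h1
    _ = m.factorial * Real.exp (r * c) := by ring
  calc c ^ m * Real.exp (-(r * c)) ≤ (m.factorial / r ^ m * Real.exp (r * c)) * Real.exp (-(r * c)) := by
        apply mul_le_mul_of_nonneg_right h2 (Real.exp_nonneg _)
  _ = m.factorial / r ^ m := by rw [mul_assoc, ← Real.exp_add]; simp

lemma one_sub_exp_neg_le {x : ℝ} (hx : 0 ≤ x) : 1 - Real.exp (-x) ≤ x := by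
  nlinarith [Real.add_one_le_exp (-x)]

noncomputable def Gm (a : ℝ) (h : ℝ → ℝ) (N : ℝ) (m : ℕ) (ρ : ℝ) : ℝ :=
  ∫ z in Set.Ioi a, (N * h z) ^ m * Real.exp (-(ρ * N * h z)) * z ^ 2

noncomputable def G0 (a : ℝ) (h : ℝ → ℝ) (N : ℝ) (ρ : ℝ) : ℝ :=
  ∫ z in Set.Ioi a, (1 - Real.exp (-(ρ * N * h z))) * z ^ 2

lemma meas_integrand {h : ℝ → ℝ} (hmeas : Measurable h) (N : ℝ) (m : ℕ) (ρ : ℝ) :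
    Measurable fun z => (N * h z) ^ m * Real.exp (-(ρ * N * h z)) * z ^ 2 := by
  fun_prop

section main
variable {a : ℝ} {h : ℝ → ℝ} {N : ℝ}
variable (hmeas : Measurable h) (hnn : ∀ z ∈ Set.Ioi a, 0 ≤ h z)
variable (hint : IntegrableOn (fun z => h z * z ^ 2) (Set.Ioi a)) (hN : 0 ≤ N)

include hmeas hnn hint hN

lemma integrable_Fm (m : ℕ) {ρ : ℝ} (hρ : 0 < ρ) :
    IntegrableOn (fun z => (N * h z) ^ (m + 1) * Real.exp (-(ρ * N * h z)) * z ^ 2)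
      (Set.Ioi a) := by
  refine Integrable.mono ((hint.const_mul (N * (m.factorial / ρ ^ m))))
    ((meas_integrand hmeas N m.succ ρ).aestronglyMeasurable) ?_
  refine (ae_restrict_iff' measurableSet_Ioi).2 (ae_of_all _ fun z hz => ?_)
  have hc : 0 ≤ N * h z := mul_nonneg hN (hnn z hz)
  have hz2 : (0:ℝ) ≤ z ^ 2 := sq_nonneg z
  have key : (N * h z) ^ m * Real.exp (-(ρ * (N * h z))) ≤ m.factorial / ρ ^ m :=
    pow_mul_exp_neg_le m hρ hc
  have hfact : (0:ℝ) ≤ m.factorial / ρ ^ m := by positivity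
  rw [Real.norm_eq_abs, Real.norm_eq_abs]
  have h1 : |(N * h z) ^ (m+1) * Real.exp (-(ρ * N * h z)) * z ^ 2|
      = (N * h z) * ((N * h z) ^ m * Real.exp (-(ρ * (N * h z)))) * z ^ 2 := by
    rw [abs_of_nonneg (mul_nonneg (mul_nonneg (pow_nonneg hc _) (Real.exp_nonneg _)) hz2)]
    rw [mul_assoc ρ N (h z)]
    ring
  rw [h1]
  have h2 : (N * h z) * ((N * h z) ^ m * Real.exp (-(ρ * (N * h z)))) * z ^ 2
      ≤ (N * h z) * (m.factorial / ρ ^ m) * z ^ 2 :=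
    mul_le_mul_of_nonneg_right (mul_le_mul_of_nonneg_left key hc) hz2
  refine h2.trans ?_
  rw [abs_of_nonneg (by
    exact mul_nonneg (mul_nonneg hN hfact) (mul_nonneg (hnn z hz) hz2))]
  ring_nf
  exact le_refl _

lemma integrable_F0 {ρ : ℝ} (hρ : 0 ≤ ρ) :
    IntegrableOn (fun z => (1 - Real.exp (-(ρ * N * h z))) * z ^ 2) (Set.Ioi a) := by
  refine Integrable.mono ((hint.const_mul (ρ * N))) ?_ ?_
  · exact (by fun_prop : Measurable fun z => (1 - Real.exp (-(ρ * N * h z))) * z ^ 2).aestronglyMeasurable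
  refine (ae_restrict_iff' measurableSet_Ioi).2 (ae_of_all _ fun z hz => ?_)
  have hh : 0 ≤ h z := hnn z hz
  have hz2 : (0:ℝ) ≤ z ^ 2 := sq_nonneg z
  have hx : 0 ≤ ρ * N * h z := mul_nonneg (mul_nonneg hρ hN) hh
  have hsub : 0 ≤ 1 - Real.exp (-(ρ * N * h z)) := by
    simp only [sub_nonneg]
    exact Real.exp_le_one_iff.2 (by linarith)
  rw [Real.norm_eq_abs, Real.norm_eq_abs, abs_of_nonneg (mul_nonneg hsub hz2),
    abs_of_nonneg (mul_nonneg (mul_nonneg hρ hN) (mul_nonneg hh hz2))]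
  have := one_sub_exp_neg_le hx
  nlinarith [sq_nonneg z]
end main

section main2
variable {a : ℝ} {h : ℝ → ℝ} {N : ℝ}
variable (hmeas : Measurable h) (hnn : ∀ z ∈ Set.Ioi a, 0 ≤ h z)
variable (hint : IntegrableOn (fun z => h z * z ^ 2) (Set.Ioi a)) (hN : 0 ≤ N)

lemma ptwise_deriv (m : ℕ) (z ρ : ℝ) :
    HasDerivAt (fun ρ => (N * h z) ^ m * Real.exp (-(ρ * N * h z)) * z ^ 2)
      (-((N * h z) ^ (m+1) * Real.exp (-(ρ * N * h z)) * z ^ 2)) ρ := by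
  have hlin : HasDerivAt (fun ρ : ℝ => -(ρ * N * h z)) (-(N * h z)) ρ := by
    simpa using (((hasDerivAt_id ρ).mul_const N).mul_const (h z)).fun_neg
  have hexp := hlin.exp
  have := (hexp.const_mul ((N * h z) ^ m)).mul_const (z ^ 2)
  exact this.congr_deriv (by ring)

lemma ptwise_deriv0 (z ρ : ℝ) :
    HasDerivAt (fun ρ => (1 - Real.exp (-(ρ * N * h z))) * z ^ 2)
      ((N * h z) ^ 1 * Real.exp (-(ρ * N * h z)) * z ^ 2) ρ := by
  have hlin : HasDerivAt (fun ρ : ℝ => -(ρ * N * h z)) (-(N * h z)) ρ := by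
    simpa using (((hasDerivAt_id ρ).mul_const N).mul_const (h z)).fun_neg
  have hexp := hlin.exp
  have := ((hasDerivAt_const ρ (1:ℝ)).sub hexp).mul_const (z ^ 2)
  exact this.congr_deriv (by ring)

include hmeas hnn hint hN

lemma hasDerivAt_Gm (m : ℕ) {ρ₀ : ℝ} (hρ₀ : 0 < ρ₀) :
    HasDerivAt (Gm a h N (m+1)) (-(Gm a h N (m+2) ρ₀)) ρ₀ := by
  have hε : 0 < ρ₀ / 2 := by linarith
  have key := hasDerivAt_integral_of_dominated_loc_of_deriv_le
    (μ := volume.restrict (Set.Ioi a)) (x₀ := ρ₀)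
    (F := fun ρ z => (N * h z) ^ (m+1) * Real.exp (-(ρ * N * h z)) * z ^ 2)
    (F' := fun ρ z => -((N * h z) ^ (m+2) * Real.exp (-(ρ * N * h z)) * z ^ 2))
    (bound := fun z => (N * ((m+1).factorial / (ρ₀/2) ^ (m+1))) * (h z * z ^ 2))
    (Metric.ball_mem_nhds ρ₀ hε)
    (Eventually.of_forall fun ρ => (meas_integrand hmeas N (m+1) ρ).aestronglyMeasurable)
    (integrable_Fm hmeas hnn hint hN m hρ₀)
    ((meas_integrand hmeas N (m+2) ρ₀).aestronglyMeasurable.neg)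
    ?_ (hint.const_mul _) ?_
  · have h2 : (∫ z in Set.Ioi a, -((N * h z) ^ (m+2) * Real.exp (-(ρ₀ * N * h z)) * z ^ 2))
        = -(Gm a h N (m+2) ρ₀) := by
      rw [integral_neg]; rfl
    rw [h2] at key
    exact key.2
  · refine (ae_restrict_iff' measurableSet_Ioi).2 (ae_of_all _ fun z hz => ?_)
    intro ρ hρ
    rw [Metric.mem_ball, Real.dist_eq] at hρ
    have hρ2 : ρ₀ / 2 ≤ ρ := by cases abs_lt.1 hρ; linarith
    have hc : 0 ≤ N * h z := mul_nonneg hN (hnn z hz)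
    have hz2 : (0:ℝ) ≤ z ^ 2 := sq_nonneg z
    have hexp_le : Real.exp (-(ρ * N * h z)) ≤ Real.exp (-(ρ₀/2 * N * h z)) := by
      apply Real.exp_le_exp.2
      have : ρ₀/2 * (N * h z) ≤ ρ * (N * h z) := mul_le_mul_of_nonneg_right hρ2 hc
      rw [mul_assoc, mul_assoc]; linarith
    have key2 : (N * h z) ^ (m+1) * Real.exp (-(ρ₀/2 * (N * h z)))
        ≤ (m+1).factorial / (ρ₀/2) ^ (m+1) := pow_mul_exp_neg_le (m+1) hε hc
    rw [mul_assoc (ρ₀/2) N (h z)] at hexp_le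
    rw [Real.norm_eq_abs, abs_neg,
      abs_of_nonneg (mul_nonneg (mul_nonneg (pow_nonneg hc _) (Real.exp_nonneg _)) hz2)]
    calc (N * h z) ^ (m+2) * Real.exp (-(ρ * N * h z)) * z ^ 2
        = (N * h z) * ((N * h z) ^ (m+1) * Real.exp (-(ρ * N * h z))) * z ^ 2 := by ring
      _ ≤ (N * h z) * ((N * h z) ^ (m+1) * Real.exp (-(ρ₀/2 * (N * h z)))) * z ^ 2 := by
          apply mul_le_mul_of_nonneg_right _ hz2
          exact mul_le_mul_of_nonneg_left
            (mul_le_mul_of_nonneg_left hexp_le (pow_nonneg hc _)) hc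
      _ ≤ (N * h z) * ((m+1).factorial / (ρ₀/2) ^ (m+1)) * z ^ 2 := by
          apply mul_le_mul_of_nonneg_right (mul_le_mul_of_nonneg_left key2 hc) hz2
      _ = N * ((m+1).factorial / (ρ₀/2) ^ (m+1)) * (h z * z ^ 2) := by ring
  · exact ae_of_all _ fun z ρ _ => ptwise_deriv (m+1) z ρ

lemma hasDerivAt_G0 {ρ₀ : ℝ} (hρ₀ : 0 < ρ₀) :
    HasDerivAt (G0 a h N) (Gm a h N 1 ρ₀) ρ₀ := by
  have hε : 0 < ρ₀ / 2 := by linarith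
  have key := hasDerivAt_integral_of_dominated_loc_of_deriv_le
    (μ := volume.restrict (Set.Ioi a)) (x₀ := ρ₀)
    (F := fun ρ z => (1 - Real.exp (-(ρ * N * h z))) * z ^ 2)
    (F' := fun ρ z => (N * h z) ^ 1 * Real.exp (-(ρ * N * h z)) * z ^ 2)
    (bound := fun z => N * (h z * z ^ 2))
    (Metric.ball_mem_nhds ρ₀ hε)
    (Eventually.of_forall fun ρ =>
      (by fun_prop : Measurable fun z => (1 - Real.exp (-(ρ * N * h z))) * z ^ 2).aestronglyMeasurable)
    (integrable_F0 hmeas hnn hint hN hρ₀.le)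
    ((meas_integrand hmeas N 1 ρ₀).aestronglyMeasurable)
    ?_ (hint.const_mul _) ?_
  · exact key.2
  · refine (ae_restrict_iff' measurableSet_Ioi).2 (ae_of_all _ fun z hz => ?_)
    intro ρ hρ
    rw [Metric.mem_ball, Real.dist_eq] at hρ
    have hρ2 : 0 ≤ ρ := by cases abs_lt.1 hρ; linarith
    have hc : 0 ≤ N * h z := mul_nonneg hN (hnn z hz)
    have hz2 : (0:ℝ) ≤ z ^ 2 := sq_nonneg z
    have hexp_le : Real.exp (-(ρ * N * h z)) ≤ 1 := by
      apply Real.exp_le_one_iff.2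
      rw [mul_assoc]
      have : 0 ≤ ρ * (N * h z) := mul_nonneg hρ2 hc
      linarith
    rw [Real.norm_eq_abs,
      abs_of_nonneg (mul_nonneg (mul_nonneg (pow_nonneg hc _) (Real.exp_nonneg _)) hz2)]
    calc (N * h z) ^ 1 * Real.exp (-(ρ * N * h z)) * z ^ 2
        ≤ (N * h z) ^ 1 * 1 * z ^ 2 := by
          apply mul_le_mul_of_nonneg_right
            (mul_le_mul_of_nonneg_left hexp_le (pow_nonneg hc _)) hz2
      _ = N * (h z * z ^ 2) := by ring
  · exact ae_of_all _ fun z ρ _ => ptwise_deriv0 z ρ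
end main2

@[simp] lemma bell_zero (x : ℕ → ℝ) : bell x 0 = 1 := by rw [bell]

lemma bell_succ (x : ℕ → ℝ) (n : ℕ) :
    bell x (n + 1) = ∑ k ∈ Finset.range (n + 1),
      (n.choose k : ℝ) * bell x (n - k) * x (k + 1) := by rw [bell]

lemma bell_congr {x y : ℕ → ℝ} (hxy : ∀ m, 1 ≤ m → x m = y m) :
    ∀ n, bell x n = bell y n := by
  intro n
  induction n using Nat.strong_induction_on with
  | _ n ih =>
    match n with
    | 0 => simp
    | n + 1 =>
      rw [bell_succ, bell_succ]
      exact Finset.sum_congr rfl fun k hk => by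
        rw [ih (n - k) (by rw [Finset.mem_range] at hk; omega), hxy (k+1) (by omega)]

noncomputable def phi (a : ℝ) (h : ℝ → ℝ) (A B N : ℝ) : ℕ → ℝ → ℝ
  | 0 => fun ρ => -(ρ * A) - B * G0 a h N ρ
  | 1 => fun ρ => -A - B * Gm a h N 1 ρ
  | (m+2) => fun ρ => (-1 : ℝ) ^ (m+2) * (B * Gm a h N (m+2) ρ)

noncomputable def Dn (a : ℝ) (h : ℝ → ℝ) (A B N : ℝ) (n : ℕ) (ρ : ℝ) : ℝ :=
  bell (fun m => phi a h A B N m ρ) n * Real.exp (phi a h A B N 0 ρ)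

section main3
variable {a : ℝ} {h : ℝ → ℝ} {N : ℝ} (A B : ℝ)
variable (hmeas : Measurable h) (hnn : ∀ z ∈ Set.Ioi a, 0 ≤ h z)
variable (hint : IntegrableOn (fun z => h z * z ^ 2) (Set.Ioi a)) (hN : 0 ≤ N)

include hmeas hnn hint hN

lemma hasDerivAt_phi (m : ℕ) {ρ : ℝ} (hρ : 0 < ρ) :
    HasDerivAt (phi a h A B N m) (phi a h A B N (m+1) ρ) ρ := by
  match m with
  | 0 =>
    have h1 : HasDerivAt (fun ρ : ℝ => -(ρ * A)) (-A) ρ := by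
      simpa using ((hasDerivAt_id ρ).mul_const A).fun_neg
    have h2 := (hasDerivAt_G0 hmeas hnn hint hN hρ).const_mul B
    exact (h1.sub h2 : _)
  | 1 =>
    have h2 := (hasDerivAt_Gm hmeas hnn hint hN 0 hρ).const_mul B
    have h3 := (hasDerivAt_const ρ (-A)).sub h2
    refine h3.congr_deriv ?_
    symm
    show ((-1:ℝ)) ^ (0+2) * (B * Gm a h N (0+2) ρ) = _
    ring
  | (m+2) =>
    have h2 := ((hasDerivAt_Gm hmeas hnn hint hN (m+1) hρ).const_mul B).const_mul
      ((-1 : ℝ) ^ (m+2))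
    refine h2.congr_deriv ?_
    symm
    show ((-1:ℝ)) ^ (m+3) * (B * Gm a h N (m+3) ρ) = _
    rw [pow_succ]
    ring

lemma hasDerivAt_Dn (n : ℕ) {ρ : ℝ} (hρ : 0 < ρ) :
    HasDerivAt (Dn a h A B N n) (Dn a h A B N (n+1) ρ) ρ := by
  induction n using Nat.strong_induction_on generalizing ρ with
  | _ n ih =>
    match n with
    | 0 =>
      have h0 := (hasDerivAt_phi A B hmeas hnn hint hN 0 hρ).exp
      have he : Dn a h A B N 0 = fun ρ => Real.exp (phi a h A B N 0 ρ) := by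
        funext ρ; simp [Dn]
      rw [he]
      convert h0 using 1
      simp [Dn, bell_succ, Finset.sum_range_one]
      ring
    | n + 1 =>
      have heq : Dn a h A B N (n+1) = fun ρ => ∑ k ∈ Finset.range (n+1),
          (n.choose k : ℝ) * (phi a h A B N (k+1) ρ * Dn a h A B N (n-k) ρ) := by
        funext ρ
        simp only [Dn, bell_succ, Finset.sum_mul]
        exact Finset.sum_congr rfl fun k hk => by ring
      rw [heq]
      have hd : HasDerivAt (fun ρ => ∑ k ∈ Finset.range (n+1),
          (n.choose k : ℝ) * (phi a h A B N (k+1) ρ * Dn a h A B N (n-k) ρ))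
          (∑ k ∈ Finset.range (n+1), (n.choose k : ℝ) *
            (phi a h A B N (k+2) ρ * Dn a h A B N (n-k) ρ +
             phi a h A B N (k+1) ρ * Dn a h A B N (n-k+1) ρ)) ρ := by
        apply HasDerivAt.fun_sum
        intro k hk
        rw [Finset.mem_range] at hk
        exact ((hasDerivAt_phi A B hmeas hnn hint hN (k+1) hρ).mul
          (ih (n-k) (by omega) hρ)).const_mul _
      convert hd using 1
      -- Pascal identity computation
      have key : ∑ k ∈ Finset.range (n+1), (n.choose k : ℝ) *
            (phi a h A B N (k+2) ρ * Dn a h A B N (n-k) ρ +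
             phi a h A B N (k+1) ρ * Dn a h A B N (n-k+1) ρ)
          = ∑ k ∈ Finset.range (n+2), ((n+1).choose k : ℝ) *
              (phi a h A B N (k+1) ρ * Dn a h A B N (n+1-k) ρ) := by
        have e1 : ∑ k ∈ Finset.range (n+1), (n.choose k : ℝ) *
              (phi a h A B N (k+1) ρ * Dn a h A B N (n-k+1) ρ)
            = (∑ k ∈ Finset.range (n+1), (n.choose (k+1) : ℝ) *
                (phi a h A B N (k+2) ρ * Dn a h A B N (n-k) ρ)) +
              phi a h A B N 1 ρ * Dn a h A B N (n+1) ρ := by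
          rw [Finset.sum_range_succ'
            (f := fun k => (n.choose k : ℝ) *
              (phi a h A B N (k+1) ρ * Dn a h A B N (n-k+1) ρ))]
          rw [Finset.sum_range_succ
            (f := fun k => (n.choose (k+1) : ℝ) *
              (phi a h A B N (k+2) ρ * Dn a h A B N (n-k) ρ))]
          rw [Nat.choose_succ_self]
          simp only [Nat.cast_zero, zero_mul, add_zero, Nat.choose_zero_right,
            Nat.cast_one, one_mul, Nat.sub_zero]
          congr 1
          exact Finset.sum_congr rfl fun k hk => by
            rw [Finset.mem_range] at hk
            rw [show n-(k+1)+1 = n-k from by omega]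
        calc ∑ k ∈ Finset.range (n+1), (n.choose k : ℝ) *
              (phi a h A B N (k+2) ρ * Dn a h A B N (n-k) ρ +
               phi a h A B N (k+1) ρ * Dn a h A B N (n-k+1) ρ)
            = (∑ k ∈ Finset.range (n+1), (n.choose k : ℝ) *
                (phi a h A B N (k+2) ρ * Dn a h A B N (n-k) ρ)) +
              ∑ k ∈ Finset.range (n+1), (n.choose k : ℝ) *
                (phi a h A B N (k+1) ρ * Dn a h A B N (n-k+1) ρ) := by
              rw [← Finset.sum_add_distrib]
              exact Finset.sum_congr rfl fun k hk => by rw [mul_add]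
          _ = (∑ k ∈ Finset.range (n+1), ((n+1).choose (k+1) : ℝ) *
                (phi a h A B N (k+2) ρ * Dn a h A B N (n-k) ρ)) +
              phi a h A B N 1 ρ * Dn a h A B N (n+1) ρ := by
              rw [e1, ← add_assoc, ← Finset.sum_add_distrib]
              congr 1
              exact Finset.sum_congr rfl fun k hk => by
                rw [Nat.choose_succ_succ, Nat.cast_add, add_mul]
          _ = ∑ k ∈ Finset.range (n+2), ((n+1).choose k : ℝ) *
                (phi a h A B N (k+1) ρ * Dn a h A B N (n+1-k) ρ) := by
              rw [Finset.sum_range_succ'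
                (f := fun k => ((n+1).choose k : ℝ) *
                  (phi a h A B N (k+1) ρ * Dn a h A B N (n+1-k) ρ))]
              simp only [Nat.choose_zero_right, Nat.cast_one, one_mul, Nat.sub_zero]
              congr 1
              exact Finset.sum_congr rfl fun k hk => by
                rw [show n+1-(k+1) = n-k from by omega]
        done
      rw [key]
      simp only [Dn, bell_succ, Finset.sum_mul]
      exact Finset.sum_congr rfl fun k hk => by ring
end main3

section main4
variable {a : ℝ} {h : ℝ → ℝ} {N : ℝ} (A B : ℝ)
variable (hmeas : Measurable h) (hnn : ∀ z ∈ Set.Ioi a, 0 ≤ h z)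
variable (hint : IntegrableOn (fun z => h z * z ^ 2) (Set.Ioi a)) (hN : 0 ≤ N)

include hmeas hnn hint hN

lemma contDiffOn_Dn (n : ℕ) : ∀ m : ℕ, ContDiffOn ℝ n (Dn a h A B N m) (Set.Ioi 0) := by
  induction n with
  | zero =>
    intro m
    rw [show ((0:ℕ) : WithTop ℕ∞) = 0 from rfl, contDiffOn_zero]
    exact fun x hx => (hasDerivAt_Dn A B hmeas hnn hint hN m hx).continuousAt.continuousWithinAt
  | succ n ihn =>
    intro m
    rw [show ((n+1:ℕ) : WithTop ℕ∞) = (n : WithTop ℕ∞) + 1 from by push_cast; rfl,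
      contDiffOn_succ_iff_deriv_of_isOpen isOpen_Ioi]
    refine ⟨fun x hx => (hasDerivAt_Dn A B hmeas hnn hint hN m hx).differentiableAt.differentiableWithinAt,
      ?_, (ihn (m+1)).congr fun x hx => (hasDerivAt_Dn A B hmeas hnn hint hN m hx).deriv⟩
    intro hω
    exact absurd hω (by simp)

lemma iteratedDeriv_Dn_eq (n : ℕ) :
    ∀ ρ ∈ Set.Ioi (0:ℝ), iteratedDeriv n (Dn a h A B N 0) ρ = Dn a h A B N n ρ := by
  induction n with
  | zero => intro ρ hρ; simp [iteratedDeriv_zero]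
  | succ n ihn =>
    intro ρ hρ
    rw [iteratedDeriv_succ]
    have hev : iteratedDeriv n (Dn a h A B N 0) =ᶠ[nhds ρ] Dn a h A B N n :=
      Filter.eventuallyEq_of_mem (isOpen_Ioi.mem_nhds hρ) ihn
    rw [hev.deriv_eq]
    exact (hasDerivAt_Dn A B hmeas hnn hint hN n hρ).deriv

end main4

/-- Bell-polynomial evaluation of the `n`-th derivative at `ρ = 1` of
`L(ρ) = exp(−ρA − B∫_a^∞(1−e^{−ρNh(z)})z²dz)` (eq. (33) of the paper). -/
theorem laplace_total_iteratedDeriv_bell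
    (a : ℝ) (ha : 0 ≤ a) (h : ℝ → ℝ) (hmeas : Measurable h)
    (hnn : ∀ z ∈ Set.Ioi a, 0 ≤ h z)
    (hint : IntegrableOn (fun z => h z * z ^ 2) (Set.Ioi a))
    (A B N : ℝ) (hA : 0 ≤ A) (hB : 0 ≤ B) (hN : 0 ≤ N)
    (n : ℕ) (hn : 1 ≤ n)
    (L : ℝ → ℝ)
    (hL : ∀ ρ : ℝ, L ρ =
      Real.exp (-(ρ * A) - B * ∫ z in Set.Ioi a, (1 - Real.exp (-(ρ * N * h z))) * z ^ 2))
    (q : ℕ → ℝ)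
    (hq1 : q 1 = A + B * ∫ z in Set.Ioi a, N * h z * Real.exp (-(N * h z)) * z ^ 2)
    (hq : ∀ m : ℕ, 2 ≤ m →
      q m = B * ∫ z in Set.Ioi a, (N * h z) ^ m * Real.exp (-(N * h z)) * z ^ 2) :
    ContDiffAt ℝ n L 1 ∧
    iteratedDeriv n L 1 = (-1) ^ n * bell q n * L 1 := by
  have hL0 : L = Dn a h A B N 0 := by
    funext ρ
    rw [hL]
    simp [Dn, bell_zero, phi, G0]
  have hone : (1:ℝ) ∈ Set.Ioi (0:ℝ) := by norm_num
  have hphi : ∀ m : ℕ, 1 ≤ m → phi a h A B N m 1 = (-1) ^ m * q m := by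
    intro m hm
    match m with
    | 1 =>
      have hg : Gm a h N 1 1 = ∫ z in Set.Ioi a, N * h z * Real.exp (-(N * h z)) * z ^ 2 := by
        simp [Gm, pow_one, one_mul]
      show -A - B * Gm a h N 1 1 = (-1) ^ 1 * q 1
      rw [hg, hq1]; ring
    | (k+2) =>
      have hg : Gm a h N (k+2) 1
          = ∫ z in Set.Ioi a, (N * h z) ^ (k+2) * Real.exp (-(N * h z)) * z ^ 2 := by
        simp [Gm, one_mul]
      show (-1:ℝ) ^ (k+2) * (B * Gm a h N (k+2) 1) = (-1) ^ (k+2) * q (k+2)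
      rw [hg, hq (k+2) (by omega)]
  constructor
  · rw [hL0]
    exact (contDiffOn_Dn A B hmeas hnn hint hN n 0).contDiffAt
      (isOpen_Ioi.mem_nhds hone)
  · rw [hL0, iteratedDeriv_Dn_eq A B hmeas hnn hint hN n 1 hone]
    have hb : bell (fun m => phi a h A B N m 1) n = (-1) ^ n * bell q n := by
      rw [bell_congr (y := fun m => (-1 : ℝ) ^ m * q m) (fun m hm => hphi m hm) n,
        bell_neg]
    show bell (fun m => phi a h A B N m 1) n * Real.exp (phi a h A B N 0 1) = _
    rw [hb]
    simp [Dn, bell_zero]
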